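/- arXiv:2309.16841 — 2 statements merged into one kernel-verified Lean document; each statement's English description precedes it below -/
import Mathlib

section
/- Let l > 0 and c ∈ ℝ, and let F_c denote the ferronematic free energy with coupling constant c. For any C¹ functions Q11, Q12, M1, M2 on [−1,1], the transformed configuration (−Q11(−y), Q12(−y), −M1(−y), M2(−y)) satisfies F_{−c}(−Q11(−·), Q12(−·), −M1(−·), M2(−·)) = F_c(Q11, Q12, M1, M2); that is, the map relating solutions for c and −c preserves the free energy. -/
open Set

/-- The ferronematic free energy on `Ω = [-1, 1]` with elastic constant `l` and
coupling constant `c`. -/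
noncomputable def ferroEnergy (l c : ℝ) (Q11 Q12 M1 M2 : ℝ → ℝ) : ℝ :=
  ∫ y in (-1 : ℝ)..1,
    (l / 2 * ((deriv Q11 y) ^ 2 + (deriv Q12 y) ^ 2)
      + (Q11 y ^ 2 + Q12 y ^ 2 - 1) ^ 2
      + l / 2 * ((deriv M1 y) ^ 2 + (deriv M2 y) ^ 2)
      + 1 / 4 * (M1 y ^ 2 + M2 y ^ 2 - 1) ^ 2
      - c * Q11 y * (M1 y ^ 2 - M2 y ^ 2)
      - 2 * c * Q12 y * M1 y * M2 y)

lemma deriv_comp_neg' {f : ℝ → ℝ} {y : ℝ} (hf : DifferentiableAt ℝ f (-y)) :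
    deriv (fun z => f (-z)) y = -deriv f (-y) := by
  have h := hf.hasDerivAt.comp y (hasDerivAt_neg y)
  simpa [Function.comp_def] using h.deriv

/-- For C¹ configurations, the transformation `(Q11, Q12, M1, M2)(y) ↦
(-Q11(-y), Q12(-y), -M1(-y), M2(-y))` maps the free energy with coupling `c` to the free
energy with coupling `-c` without changing its value. -/
theorem ferroEnergy_negative_coupling (l c : ℝ) (hl : 0 < l) (Q11 Q12 M1 M2 : ℝ → ℝ)
    (hQ11 : ContDiffOn ℝ 1 Q11 (Icc (-1) 1)) (hQ12 : ContDiffOn ℝ 1 Q12 (Icc (-1) 1))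
    (hM1 : ContDiffOn ℝ 1 M1 (Icc (-1) 1)) (hM2 : ContDiffOn ℝ 1 M2 (Icc (-1) 1)) :
    ferroEnergy l (-c) (fun y => -Q11 (-y)) (fun y => Q12 (-y))
        (fun y => -M1 (-y)) (fun y => M2 (-y))
      = ferroEnergy l c Q11 Q12 M1 M2 := by
  unfold ferroEnergy
  set G : ℝ → ℝ := fun y =>
    (l / 2 * ((deriv Q11 y) ^ 2 + (deriv Q12 y) ^ 2)
      + (Q11 y ^ 2 + Q12 y ^ 2 - 1) ^ 2
      + l / 2 * ((deriv M1 y) ^ 2 + (deriv M2 y) ^ 2)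
      + 1 / 4 * (M1 y ^ 2 + M2 y ^ 2 - 1) ^ 2
      - c * Q11 y * (M1 y ^ 2 - M2 y ^ 2)
      - 2 * c * Q12 y * M1 y * M2 y) with hG
  have diffAt : ∀ (f : ℝ → ℝ), ContDiffOn ℝ 1 f (Icc (-1) 1) →
      ∀ x ∈ Ioo (-1 : ℝ) 1, DifferentiableAt ℝ f x := by
    intro f hf x hx
    exact (hf.differentiableOn one_ne_zero).differentiableAt (Icc_mem_nhds hx.1 hx.2)
  have key : ∀ y ∈ Ioo (-1 : ℝ) 1,
      (l / 2 * ((deriv (fun y => -Q11 (-y)) y) ^ 2 + (deriv (fun y => Q12 (-y)) y) ^ 2)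
        + ((fun y => -Q11 (-y)) y ^ 2 + (fun y => Q12 (-y)) y ^ 2 - 1) ^ 2
        + l / 2 * ((deriv (fun y => -M1 (-y)) y) ^ 2 + (deriv (fun y => M2 (-y)) y) ^ 2)
        + 1 / 4 * ((fun y => -M1 (-y)) y ^ 2 + (fun y => M2 (-y)) y ^ 2 - 1) ^ 2
        - (-c) * (fun y => -Q11 (-y)) y * ((fun y => -M1 (-y)) y ^ 2 - (fun y => M2 (-y)) y ^ 2)
        - 2 * (-c) * (fun y => Q12 (-y)) y * (fun y => -M1 (-y)) y * (fun y => M2 (-y)) y)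
      = G (-y) := by
    intro y hy
    have hy' : -y ∈ Ioo (-1 : ℝ) 1 := by constructor <;> [linarith [hy.2]; linarith [hy.1]]
    have d1 : deriv (fun z => -Q11 (-z)) y = deriv Q11 (-y) := by
      rw [deriv.fun_neg, deriv_comp_neg' (diffAt Q11 hQ11 _ hy'), neg_neg]
    have d2 : deriv (fun z => Q12 (-z)) y = -deriv Q12 (-y) :=
      deriv_comp_neg' (diffAt Q12 hQ12 _ hy')
    have d3 : deriv (fun z => -M1 (-z)) y = deriv M1 (-y) := by
      rw [deriv.fun_neg, deriv_comp_neg' (diffAt M1 hM1 _ hy'), neg_neg]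
    have d4 : deriv (fun z => M2 (-z)) y = -deriv M2 (-y) :=
      deriv_comp_neg' (diffAt M2 hM2 _ hy')
    simp only [hG, d1, d2, d3, d4]
    ring
  have hae : ∀ᵐ (y : ℝ), y ∈ Set.uIoc (-1 : ℝ) 1 →
      (l / 2 * ((deriv (fun y => -Q11 (-y)) y) ^ 2 + (deriv (fun y => Q12 (-y)) y) ^ 2)
        + ((fun y => -Q11 (-y)) y ^ 2 + (fun y => Q12 (-y)) y ^ 2 - 1) ^ 2
        + l / 2 * ((deriv (fun y => -M1 (-y)) y) ^ 2 + (deriv (fun y => M2 (-y)) y) ^ 2)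
        + 1 / 4 * ((fun y => -M1 (-y)) y ^ 2 + (fun y => M2 (-y)) y ^ 2 - 1) ^ 2
        - (-c) * (fun y => -Q11 (-y)) y * ((fun y => -M1 (-y)) y ^ 2 - (fun y => M2 (-y)) y ^ 2)
        - 2 * (-c) * (fun y => Q12 (-y)) y * (fun y => -M1 (-y)) y * (fun y => M2 (-y)) y)
      = G (-y) := by
    have h1 : ∀ᵐ (y : ℝ), y ≠ 1 := by
      rw [MeasureTheory.ae_iff]
      simpa using Real.volume_singleton (a := (1 : ℝ))
    filter_upwards [h1] with y hy1 hmem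
    have : y ∈ Ioc (-1 : ℝ) 1 := by
      simpa [Set.uIoc_of_le (by norm_num : (-1 : ℝ) ≤ 1)] using hmem
    exact key y ⟨this.1, lt_of_le_of_ne this.2 hy1⟩
  rw [intervalIntegral.integral_congr_ae hae]
  have := intervalIntegral.integral_comp_neg (a := (-1 : ℝ)) (b := 1) G
  simpa using this
end

section
/- For every c > 0 there exists a unique ρ* > 1 satisfying the cubic equation 4 ρ*³ − (4 + 2c²) ρ* − c = 0; moreover 1 + 2 c ρ* > 0, so that √(1 + 2cρ*) is well defined and the OR bulk energy density minimisers (Q11, M1) = (ρ*, ±√(1 + 2cρ*)) exist. -/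
/-- For every `c > 0` there is a unique `ρ* > 1` solving the cubic
`4ρ*³ - (4 + 2c²)ρ* - c = 0`; moreover any such root satisfies `1 + 2cρ* > 0`, so the OR
bulk energy density minimisers `(ρ*, ±√(1 + 2cρ*))` are well defined. -/
theorem orBulk_minimiser_exists_unique (c : ℝ) (hc : 0 < c) :
    (∃! ρ : ℝ, 1 < ρ ∧ 4 * ρ ^ 3 - (4 + 2 * c ^ 2) * ρ - c = 0) ∧
    (∀ ρ : ℝ, 1 < ρ → 4 * ρ ^ 3 - (4 + 2 * c ^ 2) * ρ - c = 0 → 0 < 1 + 2 * c * ρ) := by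
  set f : ℝ → ℝ := fun ρ => 4 * ρ ^ 3 - (4 + 2 * c ^ 2) * ρ - c with hf
  have hcont : ContinuousOn f (Set.Icc 1 (c + 2)) := by
    apply Continuous.continuousOn; fun_prop
  have h1 : f 1 < 0 := by simp only [hf]; nlinarith
  have h2 : 0 < f (c + 2) := by simp only [hf]; nlinarith
  have hle : (1 : ℝ) ≤ c + 2 := by linarith
  have := intermediate_value_Icc hle hcont
  have hmem : (0 : ℝ) ∈ Set.Icc (f 1) (f (c + 2)) := ⟨le_of_lt h1, le_of_lt h2⟩
  obtain ⟨ρ, hρmem, hρ0⟩ := this hmem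
  have hρ1 : 1 < ρ := by
    rcases lt_or_eq_of_le hρmem.1 with h | h
    · exact h
    · exfalso; rw [← h] at hρ0; linarith [h1, hρ0.symm ▸ h1]
  constructor
  · refine ⟨ρ, ⟨hρ1, hρ0⟩, ?_⟩
    rintro ρ' ⟨hρ'1, hρ'0⟩
    by_contra hne
    have h1' : 4 * ρ' ^ 3 - (4 + 2 * c ^ 2) * ρ' - c = 0 := hρ'0
    have h2' : 4 * ρ ^ 3 - (4 + 2 * c ^ 2) * ρ - c = 0 := hρ0
    have hsub : (ρ' - ρ) * (4 * (ρ' ^ 2 + ρ' * ρ + ρ ^ 2) - (4 + 2 * c ^ 2)) = 0 := by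
      nlinarith [h1', h2']
    have hne' : ρ' - ρ ≠ 0 := sub_ne_zero.mpr hne
    have hkey : 4 * (ρ' ^ 2 + ρ' * ρ + ρ ^ 2) = 4 + 2 * c ^ 2 := by
      rcases mul_eq_zero.mp hsub with h | h
      · exact absurd h hne'
      · linarith
    -- plug back: c = -4 ρ' ρ (ρ' + ρ) < 0, contradiction
    nlinarith [h1', hkey, hρ1, hρ'1, hc]
  · intro ρ hρ _
    nlinarith
end
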